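/- Let x₁ < x₂ < x₃ < x₄ be real numbers and set η = ((x₂−x₁)·(x₄−x₃)) / ((x₃−x₁)·(x₄−x₂)). Then for every x ∈ ℝ, β_{[x₁,x₃]}(x) + β_{[x₂,x₄]}(x) − η·(β_{[x₁,x₂]}(x) + β_{[x₃,x₄]}(x)) − (1−η)·(β_{[x₂,x₃]}(x) + β_{[x₁,x₄]}(x)) = 0. -/
import Mathlib


/-- Coolness function on the line: `β_{[p,q]}(x) = 2(x-p)(q-x)/(q-p)` on `[p,q]`, `0` outside. -/
noncomputable def betaLine (p q x : ℝ) : ℝ :=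
  if x ∈ Set.Icc p q then 2 * (x - p) * (q - x) / (q - p) else 0

lemma betaLine_of_le {p q x : ℝ} (h : x ≤ p) : betaLine p q x = 0 := by
  unfold betaLine
  split_ifs with hx
  · have : x = p := le_antisymm h hx.1
    simp [this]
  · rfl

lemma betaLine_of_ge {p q x : ℝ} (h : q ≤ x) : betaLine p q x = 0 := by
  unfold betaLine
  split_ifs with hx
  · have : x = q := le_antisymm hx.2 h
    simp [this]
  · rfl

lemma betaLine_of_mem {p q x : ℝ} (h1 : p ≤ x) (h2 : x ≤ q) :
    betaLine p q x = 2 * (x - p) * (q - x) / (q - p) := by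
  unfold betaLine
  exact if_pos ⟨h1, h2⟩

/-- The vector fixed-point identity for coolness functions on the line. -/
theorem stmt_1 (x₁ x₂ x₃ x₄ : ℝ) (h12 : x₁ < x₂) (h23 : x₂ < x₃) (h34 : x₃ < x₄)
    (η : ℝ) (hη : η = ((x₂ - x₁) * (x₄ - x₃)) / ((x₃ - x₁) * (x₄ - x₂))) :
    ∀ x : ℝ,
      betaLine x₁ x₃ x + betaLine x₂ x₄ x
        - η * (betaLine x₁ x₂ x + betaLine x₃ x₄ x)
        - (1 - η) * (betaLine x₂ x₃ x + betaLine x₁ x₄ x) = 0 := by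
  intro x
  subst hη
  have n12 : x₂ - x₁ ≠ 0 := by linarith
  have n13 : x₃ - x₁ ≠ 0 := by linarith
  have n14 : x₄ - x₁ ≠ 0 := by linarith
  have n23 : x₃ - x₂ ≠ 0 := by linarith
  have n24 : x₄ - x₂ ≠ 0 := by linarith
  have n34 : x₄ - x₃ ≠ 0 := by linarith
  rcases le_or_gt x x₁ with h1 | h1
  · rw [betaLine_of_le h1, betaLine_of_le (by linarith : x ≤ x₂),
      betaLine_of_le h1, betaLine_of_le (by linarith : x ≤ x₃),
      betaLine_of_le (by linarith : x ≤ x₂), betaLine_of_le h1]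
    ring
  rcases lt_or_ge x x₂ with h2 | h2
  · rw [betaLine_of_mem h1.le (by linarith : x ≤ x₃),
      betaLine_of_le h2.le,
      betaLine_of_mem h1.le h2.le,
      betaLine_of_le (by linarith : x ≤ x₃),
      betaLine_of_le h2.le,
      betaLine_of_mem h1.le (by linarith : x ≤ x₄)]
    field_simp
    ring
  rcases lt_or_ge x x₃ with h3 | h3
  · rw [betaLine_of_mem (by linarith : x₁ ≤ x) h3.le,
      betaLine_of_mem h2 (by linarith : x ≤ x₄),
      betaLine_of_ge h2,
      betaLine_of_le h3.le,
      betaLine_of_mem h2 h3.le,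
      betaLine_of_mem (by linarith : x₁ ≤ x) (by linarith : x ≤ x₄)]
    field_simp
    ring
  rcases le_or_gt x x₄ with h4 | h4
  · rw [betaLine_of_ge h3,
      betaLine_of_mem (by linarith : x₂ ≤ x) h4,
      betaLine_of_ge (by linarith : x₂ ≤ x),
      betaLine_of_mem h3 h4,
      betaLine_of_ge h3,
      betaLine_of_mem (by linarith : x₁ ≤ x) h4]
    field_simp
    ring
  · rw [betaLine_of_ge (by linarith : x₃ ≤ x),
      betaLine_of_ge h4.le,
      betaLine_of_ge (by linarith : x₂ ≤ x),
      betaLine_of_ge h4.le,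
      betaLine_of_ge (by linarith : x₃ ≤ x),
      betaLine_of_ge h4.le]
    ring
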